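/- Let ψ be a rank-one projector with the property that there exists a free generalized twirling channel T(ρ) = tr(ψρ)ψ + tr((I−ψ)ρ)σ* with σ* free and tr(ψσ*) = 0. Suppose f = max over free channels Λ of tr[ψΛ(ρ)] > 0 and ε ∈ [0,1) with 2(1−ε)/f − 1 ≥ 1. Then there exist free channels Λ₊, Λ₋ (obtained by composing an optimal Λ with T and the replacement channel to σ*) and λ₊ − λ₋ = 1 with λ₊ + λ₋ = 2(1−ε)/f − 1 such that ½‖λ₊Λ₊(ρ) − λ₋Λ₋(ρ) − ψ‖₁ ≤ ε. -/

import Mathlib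

open Matrix BigOperators ComplexOrder

noncomputable section

/-- Square root of a positive semidefinite matrix (removed from Mathlib; old definition). -/
noncomputable def Matrix.PosSemidef.sqrt {n 𝕜 : Type*} [Fintype n] [DecidableEq n] [RCLike 𝕜]
    {A : Matrix n n 𝕜} (hA : A.PosSemidef) : Matrix n n 𝕜 :=
  hA.1.eigenvectorUnitary.1 * diagonal ((↑) ∘ (√·) ∘ hA.1.eigenvalues) *
    (star hA.1.eigenvectorUnitary : Matrix n n 𝕜)

/-- Trace norm: tr √(AᴴA). -/
noncomputable def traceNorm {n : Type*} [Fintype n] [DecidableEq n] (A : Matrix n n ℂ) : ℝ :=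
  ((Matrix.posSemidef_conjTranspose_mul_self A).sqrt.trace).re

/-- Density operator: positive semidefinite with unit trace. -/
def IsDensity {n : Type*} [Fintype n] [DecidableEq n] (ρ : Matrix n n ℂ) : Prop :=
  ρ.PosSemidef ∧ ρ.trace = 1

/-- Choi matrix of a linear map on matrices. -/
noncomputable def choi {n m : Type*} [Fintype n] [DecidableEq n] [Fintype m] [DecidableEq m]
    (Φ : Matrix n n ℂ →ₗ[ℂ] Matrix m m ℂ) : Matrix (n × m) (n × m) ℂ :=
  ∑ i : n, ∑ j : n,
    Matrix.kroneckerMap (· * ·) (Matrix.single i j (1 : ℂ)) (Φ (Matrix.single i j (1 : ℂ)))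

/-- Quantum channel: completely positive (PSD Choi matrix) and trace preserving. -/
def IsCPTP {n m : Type*} [Fintype n] [DecidableEq n] [Fintype m] [DecidableEq m]
    (Φ : Matrix n n ℂ →ₗ[ℂ] Matrix m m ℂ) : Prop :=
  (choi Φ).PosSemidef ∧ ∀ A, (Φ A).trace = A.trace
section sqrtHelpers
open scoped MatrixOrder

lemma Matrix.PosSemidef.sqrt_eq_cfcSqrt {n : Type*} [Fintype n] [DecidableEq n]
    {A : Matrix n n ℂ} (hA : A.PosSemidef) : hA.sqrt = CFC.sqrt A := by
  rw [CFC.sqrt_eq_real_sqrt A hA.nonneg, cfcₙ_eq_cfc, hA.1.cfc_eq, Matrix.IsHermitian.cfc,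
    Unitary.conjStarAlgAut_apply, Matrix.PosSemidef.sqrt]

lemma Matrix.PosSemidef.posSemidef_sqrt {n : Type*} [Fintype n] [DecidableEq n]
    {A : Matrix n n ℂ} (hA : A.PosSemidef) : hA.sqrt.PosSemidef := by
  rw [hA.sqrt_eq_cfcSqrt]
  exact (CFC.sqrt_nonneg A).posSemidef

lemma Matrix.PosSemidef.sqrt_mul_self {n : Type*} [Fintype n] [DecidableEq n]
    {A : Matrix n n ℂ} (hA : A.PosSemidef) : hA.sqrt * hA.sqrt = A := by
  rw [hA.sqrt_eq_cfcSqrt]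
  exact CFC.sqrt_mul_sqrt_self A hA.nonneg

lemma Matrix.PosSemidef.eq_sqrt_of_sq_eq {n : Type*} [Fintype n] [DecidableEq n]
    {A B : Matrix n n ℂ} (hA : A.PosSemidef) (hB : B.PosSemidef) (h : A ^ 2 = B) :
    A = hB.sqrt := by
  rw [hB.sqrt_eq_cfcSqrt]
  exact (CFC.sqrt_unique (by rw [← h, pow_two]) hA.nonneg).symm

end sqrtHelpers

lemma choi_apply' {n m : Type*} [Fintype n] [DecidableEq n] [Fintype m] [DecidableEq m]
    (Φ : Matrix n n ℂ →ₗ[ℂ] Matrix m m ℂ) (i j : n) (k l : m) :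
    choi Φ (i, k) (j, l) = Φ (Matrix.single i j 1) k l := by
  simp only [choi, Matrix.sum_apply, Matrix.kroneckerMap_apply]
  rw [Finset.sum_eq_single i]
  · rw [Finset.sum_eq_single j]
    · simp
    · intro b _ hb
      rw [Matrix.single_apply_of_ne _ _ _ _ _ (by tauto), zero_mul]
    · simp
  · intro a _ ha
    apply Finset.sum_eq_zero
    intro b _
    rw [Matrix.single_apply_of_ne _ _ _ _ _ (by tauto), zero_mul]
  · simp

lemma cp_herm {n : Type*} [Fintype n] [DecidableEq n]
    (Φ : Matrix n n ℂ →ₗ[ℂ] Matrix n n ℂ) (h : (choi Φ).IsHermitian)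
    (A : Matrix n n ℂ) : (Φ A)ᴴ = Φ Aᴴ := by
  have key : ∀ i j : n, (Φ (Matrix.single i j 1))ᴴ = Φ (Matrix.single j i 1) := by
    intro i j
    ext k l
    have h1 : (choi Φ)ᴴ (j, k) (i, l) = choi Φ (j, k) (i, l) := by rw [h.eq]
    rw [Matrix.conjTranspose_apply, choi_apply', choi_apply'] at h1
    rw [Matrix.conjTranspose_apply, h1]
  have expand : ∀ B : Matrix n n ℂ, Φ B = ∑ i, ∑ j, B i j • Φ (Matrix.single i j 1) := by
    intro B
    conv_lhs => rw [Matrix.matrix_eq_sum_single B]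
    rw [map_sum]
    refine Finset.sum_congr rfl fun i _ => ?_
    rw [map_sum]
    refine Finset.sum_congr rfl fun j _ => ?_
    rw [show Matrix.single i j (B i j) = B i j • Matrix.single i j 1 by
      rw [Matrix.smul_single, smul_eq_mul, mul_one], _root_.map_smul]
  rw [expand A, expand Aᴴ]
  rw [Matrix.conjTranspose_sum]
  simp_rw [Matrix.conjTranspose_sum, Matrix.conjTranspose_smul, key]
  rw [Finset.sum_comm]
  refine Finset.sum_congr rfl fun i _ => Finset.sum_congr rfl fun j _ => ?_
  rw [Matrix.conjTranspose_apply]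

lemma psd_vec_zero {n : Type*} [Fintype n] [DecidableEq n] {σ : Matrix n n ℂ} (hσ : σ.PosSemidef)
    {v : n → ℂ} (h : star v ⬝ᵥ σ *ᵥ v = 0) : σ *ᵥ v = 0 := by
  set S := hσ.sqrt with hS
  have hSH : S.IsHermitian := hσ.posSemidef_sqrt.isHermitian
  have hSv : S *ᵥ v = 0 := by
    rw [← dotProduct_star_self_eq_zero]
    rw [Matrix.star_mulVec, hSH.eq]
    rw [← hσ.sqrt_mul_self, ← Matrix.mulVec_mulVec, Matrix.dotProduct_mulVec] at h
    exact h
  rw [← hσ.sqrt_mul_self, ← Matrix.mulVec_mulVec, hSv, Matrix.mulVec_zero]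

lemma psd_smul' {n : Type*} [Fintype n] {A : Matrix n n ℂ} (hA : A.PosSemidef) {c : ℝ} (hc : 0 ≤ c) :
    ((c:ℂ) • A).PosSemidef := by
  constructor
  · rw [Matrix.IsHermitian, Matrix.conjTranspose_smul, hA.1.eq]
    congr 1
    simp [Complex.star_def, Complex.conj_ofReal]
  · intro x
    exact (hA.smul (a := (c:ℂ)) (by exact_mod_cast hc)).2 x


theorem virtual_distillation_achievability
    {n : Type*} [Fintype n] [DecidableEq n]
    (𝒪 : Set (Matrix n n ℂ →ₗ[ℂ] Matrix n n ℂ))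
    (hcptp : ∀ Λ ∈ 𝒪, IsCPTP Λ)
    (hcomp : ∀ Λ₁ ∈ 𝒪, ∀ Λ₂ ∈ 𝒪, Λ₁ ∘ₗ Λ₂ ∈ 𝒪)
    (v : n → ℂ) (hv : star v ⬝ᵥ v = 1)
    (ψ : Matrix n n ℂ) (hψ : ψ = Matrix.vecMulVec v (star v))
    (σs : Matrix n n ℂ) (hσs : IsDensity σs) (horth : (ψ * σs).trace = 0)
    (Tw : Matrix n n ℂ →ₗ[ℂ] Matrix n n ℂ) (hTwO : Tw ∈ 𝒪)
    (hTw : ∀ ρ : Matrix n n ℂ, Tw ρ = (ψ * ρ).trace • ψ + ((1 - ψ) * ρ).trace • σs)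
    (Rep : Matrix n n ℂ →ₗ[ℂ] Matrix n n ℂ) (hRepO : Rep ∈ 𝒪)
    (hRep : ∀ ρ : Matrix n n ℂ, Rep ρ = ρ.trace • σs)
    (ρ : Matrix n n ℂ) (hρ : IsDensity ρ)
    (f : ℝ) (hf0 : 0 < f)
    (Λ : Matrix n n ℂ →ₗ[ℂ] Matrix n n ℂ) (hΛO : Λ ∈ 𝒪)
    (hΛopt : ((ψ * Λ ρ).trace).re = f)
    (hfmax : ∀ Λ' ∈ 𝒪, ((ψ * Λ' ρ).trace).re ≤ f)
    (ε : ℝ) (hε0 : 0 ≤ ε) (hε1 : ε < 1)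
    (hC : 1 ≤ 2 * (1 - ε) / f - 1) :
    ∃ Λp ∈ 𝒪, ∃ Λm ∈ 𝒪, ∃ lp lm : ℝ, 0 ≤ lp ∧ 0 ≤ lm ∧
      lp - lm = 1 ∧ lp + lm = 2 * (1 - ε) / f - 1 ∧
      (1 / 2) * traceNorm ((lp : ℂ) • Λp ρ - (lm : ℂ) • Λm ρ - ψ) ≤ ε := by
  obtain ⟨hρP, hρtr⟩ := hρ
  obtain ⟨hσP, hσtr⟩ := hσs
  obtain ⟨hΛchoi, hΛtp⟩ := hcptp Λ hΛO
  -- basic facts about ψ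
  have hψH : ψ.IsHermitian := by
    rw [hψ, Matrix.IsHermitian]
    ext i j
    simp [Matrix.conjTranspose_apply, Matrix.vecMulVec_apply, mul_comm]
  have hψtr : ψ.trace = 1 := by
    rw [hψ]
    simpa [Matrix.trace, Matrix.diag, Matrix.vecMulVec_apply, dotProduct, mul_comm] using hv
  have hψψ : ψ * ψ = ψ := by
    rw [hψ]
    ext i j
    have : ∑ k, star (v k) * v k = 1 := by simpa [dotProduct] using hv
    simp only [Matrix.mul_apply, Matrix.vecMulVec_apply, Pi.star_apply]
    calc ∑ k, v i * star (v k) * (v k * star (v j))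
        = (∑ k, star (v k) * v k) * (v i * star (v j)) := by
          rw [Finset.sum_mul]; exact Finset.sum_congr rfl fun k _ => by ring
      _ = v i * star (v j) := by rw [this]; ring
  -- orthogonality: σs v = 0
  have hσv : σs *ᵥ v = 0 := by
    apply psd_vec_zero hσP
    rw [← horth, hψ]
    simp only [Matrix.trace, Matrix.diag, Matrix.mul_apply, Matrix.vecMulVec_apply,
      dotProduct, Matrix.mulVec, Pi.star_apply]
    rw [Finset.sum_comm]
    exact Finset.sum_congr rfl fun k _ => by
      rw [Finset.mul_sum]; exact Finset.sum_congr rfl fun i _ => by ring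
  have hvσ : star v ᵥ* σs = 0 := by
    have h' := congrArg star hσv
    rw [Matrix.star_mulVec, hσP.1.eq, star_zero] at h'
    exact h'
  have hψσ : ψ * σs = 0 := by
    rw [hψ]
    ext i j
    have h' := congrFun hvσ j
    simp only [Matrix.vecMul, dotProduct, Pi.star_apply, Pi.zero_apply] at h'
    simp only [Matrix.mul_apply, Matrix.vecMulVec_apply, Pi.star_apply, Matrix.zero_apply]
    calc ∑ k, v i * star (v k) * σs k j = v i * ∑ k, star (v k) * σs k j := by
          rw [Finset.mul_sum]; exact Finset.sum_congr rfl fun k _ => by ring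
      _ = 0 := by rw [h']; ring
  have hσψ : σs * ψ = 0 := by
    rw [hψ]
    ext i j
    have h' := congrFun hσv i
    simp only [Matrix.mulVec, dotProduct, Pi.zero_apply] at h'
    simp only [Matrix.mul_apply, Matrix.vecMulVec_apply, Pi.star_apply, Matrix.zero_apply]
    calc ∑ k, σs i k * (v k * star (v j)) = (∑ k, σs i k * v k) * star (v j) := by
          rw [Finset.sum_mul]; exact Finset.sum_congr rfl fun k _ => by ring
      _ = 0 := by rw [h']; ring
  -- Λ ρ is Hermitian, so t is real, equal to f
  have hherm : (Λ ρ).IsHermitian := by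
    rw [Matrix.IsHermitian, cp_herm Λ hΛchoi.isHermitian, hρP.1.eq]
  have ht : (ψ * Λ ρ).trace = (f : ℂ) := by
    have hstar : star ((ψ * Λ ρ).trace) = (ψ * Λ ρ).trace := by
      rw [← Matrix.trace_conjTranspose, Matrix.conjTranspose_mul, hherm.eq, hψH.eq,
        Matrix.trace_mul_comm]
    have him : ((ψ * Λ ρ).trace).im = 0 := by
      have := congrArg Complex.im hstar
      simp only [Complex.star_def, Complex.conj_im] at this
      linarith
    apply Complex.ext
    · simpa using hΛopt
    · simpa using him
  have htr1 : (Λ ρ).trace = 1 := by rw [hΛtp, hρtr]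
  -- choice of coefficients
  set lp : ℝ := (1 - ε) / f with hlp_def
  set lm : ℝ := lp - 1 with hlm_def
  have h2lp : 2 * lp = 2 * (1 - ε) / f := by rw [hlp_def]; ring
  have hlp1 : 1 ≤ lp := by
    have : 2 ≤ 2 * lp := by rw [h2lp]; linarith
    linarith
  have hlpf : lp * f = 1 - ε := div_mul_cancel₀ _ hf0.ne'
  have hlpfC : (lp : ℂ) * (f : ℂ) = 1 - (ε : ℂ) := by
    have := congrArg (Complex.ofReal) hlpf
    push_cast at this
    exact this
  have hlmC : (lm : ℂ) = (lp : ℂ) - 1 := by rw [hlm_def]; push_cast; ring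
  refine ⟨Tw ∘ₗ Λ, hcomp Tw hTwO Λ hΛO, Rep, hRepO, lp, lm, by linarith, by linarith,
    by rw [hlm_def]; ring, by rw [hlm_def, hlp_def]; ring, ?_⟩
  -- compute the matrix
  have h1 : (Tw ∘ₗ Λ) ρ = (f : ℂ) • ψ + (1 - (f : ℂ)) • σs := by
    rw [LinearMap.comp_apply, hTw, ht, Matrix.sub_mul, Matrix.one_mul, Matrix.trace_sub,
      htr1, ht]
  have hM : (lp : ℂ) • (Tw ∘ₗ Λ) ρ - (lm : ℂ) • Rep ρ - ψ = (ε : ℂ) • σs - (ε : ℂ) • ψ := by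
    rw [h1, hRep, hρtr]
    rw [smul_add, smul_smul, smul_smul, one_smul]
    rw [hlpfC, hlmC]
    match_scalars
    · ring
    · linear_combination -hlpfC
  rw [hM]
  -- trace norm computation
  set M : Matrix n n ℂ := (ε : ℂ) • σs - (ε : ℂ) • ψ with hM_def
  have hψP : ψ.PosSemidef := by
    have : ψ = (Matrix.replicateRow Unit (star v))ᴴ * Matrix.replicateRow Unit (star v) := by
      rw [hψ]
      ext i j
      simp [Matrix.mul_apply, Matrix.vecMulVec_apply, Matrix.conjTranspose_apply, Matrix.replicateRow]
    rw [this]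
    exact Matrix.posSemidef_conjTranspose_mul_self _
  have hNP : ((ε : ℂ) • (σs + ψ)).PosSemidef := psd_smul' (hσP.add hψP) hε0
  have hMH : Mᴴ = M := by
    rw [hM_def, Matrix.conjTranspose_sub, Matrix.conjTranspose_smul, Matrix.conjTranspose_smul,
      hσP.1.eq, hψH.eq]
    congr 1 <;> · congr 1; simp [Complex.star_def, Complex.conj_ofReal]
  have hsq : ((ε : ℂ) • (σs + ψ)) ^ 2 = Mᴴ * M := by
    rw [hMH, pow_two, hM_def]
    simp only [Matrix.smul_mul, Matrix.mul_smul, Matrix.sub_mul, Matrix.mul_sub,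
      Matrix.add_mul, Matrix.mul_add, hψσ, hσψ, hψψ, smul_smul]
    simp only [smul_sub, smul_add, smul_zero]
    abel
  have hsqrt : ((ε : ℂ) • (σs + ψ)) = (Matrix.posSemidef_conjTranspose_mul_self M).sqrt :=
    hNP.eq_sqrt_of_sq_eq (Matrix.posSemidef_conjTranspose_mul_self M) hsq
  have htn : traceNorm M = 2 * ε := by
    rw [traceNorm, ← hsqrt, Matrix.trace_smul, Matrix.trace_add, hσtr, hψtr]
    simp [Complex.ofReal_re]
    ring
  rw [htn]
  linarith
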